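/- Let $w=\chi_{(0,1)}$ and $v(t)=t^{-2}\big(\log(4t)\,\chi_{(1/4,1/2)}(t) - \log t\,\chi_{(1/2,1)}(t)\big)$. Then $v\ge 0$ and for all $r>0$: $\frac1r\int_0^r w(s)\,ds \approx \frac1r\int_0^r v(s)\,ds + \int_r^\infty \frac{v(s)}{s}\,ds$, with equivalence constants independent of $r$. (More generally, the equivalence holds whenever $v$ is a bounded nonnegative function with compact support in $(0,\infty)$ vanishing in a neighborhood of $0$, with $v$ not a.e. zero.) -/

import Mathlib

open MeasureTheory Set

/-- A measurable function bounded in absolute value and vanishing outside a compact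
interval is integrable. -/
lemma aux_int (f : ℝ → ℝ) (hm : Measurable f) (M a b : ℝ)
    (hbd : ∀ t, |f t| ≤ M) (hsupp : ∀ t, t ∉ Icc a b → f t = 0) :
    Integrable f := by
  have hs : Function.support f ⊆ Icc a b := by
    intro t ht
    by_contra h
    exact ht (hsupp t h)
  rw [← integrableOn_iff_integrable_of_support_subset hs]
  refine Measure.integrableOn_of_bounded (M := M) isCompact_Icc.measure_lt_top.ne
    hm.aestronglyMeasurable ?_
  filter_upwards with t
  simpa using hbd t

/-- The key general equivalence. -/
lemma aux_key (v' : ℝ → ℝ) (hm : Measurable v') (h0 : ∀ t, 0 ≤ v' t)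
    (hM : ∃ M, ∀ t, v' t ≤ M)
    (hab : ∃ a b : ℝ, 0 < a ∧ a ≤ b ∧ ∀ t, t ∉ Icc a b → v' t = 0)
    (hI : 0 < ∫ t in Ioi 0, v' t) :
    ∃ C > 0, ∀ r > 0,
      C⁻¹ * ((1 / r) * min r 1) ≤
        (1 / r) * (∫ s in Ioc 0 r, v' s) + ∫ s in Ioi r, v' s / s ∧
      (1 / r) * (∫ s in Ioc 0 r, v' s) + ∫ s in Ioi r, v' s / s ≤
        C * ((1 / r) * min r 1) := by
  obtain ⟨M, hMb⟩ := hM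
  obtain ⟨a, b, ha, habl, hsupp⟩ := hab
  have hb : 0 < b := lt_of_lt_of_le ha habl
  have hM0 : 0 ≤ M := le_trans (h0 a) (hMb a)
  set I := ∫ t in Ioi (0:ℝ), v' t with hIdef
  -- integrability of v'
  have hint : Integrable v' :=
    aux_int v' hm M a b (fun t => by rw [abs_of_nonneg (h0 t)]; exact hMb t) hsupp
  -- integrability of v'/s
  have hg_supp : ∀ t, t ∉ Icc a b → v' t / t = 0 := fun t ht => by rw [hsupp t ht]; simp
  have hg_bd : ∀ t, |v' t / t| ≤ M / a := by
    intro t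
    by_cases ht : t ∈ Icc a b
    · rw [abs_of_nonneg (div_nonneg (h0 t) (le_of_lt (lt_of_lt_of_le ha ht.1)))]
      exact div_le_div₀ hM0 (hMb t) ha ht.1
    · rw [hg_supp t ht]
      simp [div_nonneg hM0 ha.le]
  have hgint : Integrable (fun s => v' s / s) :=
    aux_int _ (hm.div measurable_id) (M / a) a b hg_bd hg_supp
  -- splitting of the integral
  have hsplit : ∀ r : ℝ, 0 < r →
      I = (∫ s in Ioc 0 r, v' s) + ∫ s in Ioi r, v' s := by
    intro r hr
    rw [hIdef, ← Ioc_union_Ioi_eq_Ioi hr.le,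
      setIntegral_union Ioc_disjoint_Ioi_same measurableSet_Ioi hint.integrableOn
        hint.integrableOn]
  -- pointwise comparison facts for v'/s
  have hpt_a : ∀ s : ℝ, v' s / s ≤ v' s / a := by
    intro s
    by_cases hs : s ∈ Icc a b
    · exact div_le_div₀ (h0 s) le_rfl ha hs.1
    · rw [hsupp s hs]; simp
  have hpt_b : ∀ s : ℝ, v' s / b ≤ v' s / s := by
    intro s
    by_cases hs : s ∈ Icc a b
    · exact div_le_div₀ (h0 s) le_rfl (lt_of_lt_of_le ha hs.1) hs.2
    · rw [hsupp s hs]; simp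
  set m1 := min a 1 with hm1
  set m2 := max b 1 with hm2
  have hm1pos : 0 < m1 := lt_min ha one_pos
  have hm2pos : 0 < m2 := lt_of_lt_of_le one_pos (le_max_right _ _)
  refine ⟨max (2 * I / m1) (m2 / I), lt_of_lt_of_le (by positivity) (le_max_left _ _),
    fun r hr => ?_⟩
  set C := max (2 * I / m1) (m2 / I) with hC
  have hCpos : 0 < C := lt_of_lt_of_le (by positivity) (le_max_left _ _)
  set S1 := ∫ s in Ioc (0:ℝ) r, v' s with hS1
  set S2 := ∫ s in Ioi r, v' s / s with hS2
  set S3 := ∫ s in Ioi r, v' s with hS3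
  have f1 : 0 ≤ S1 := setIntegral_nonneg measurableSet_Ioc fun _ _ => h0 _
  have f3 : 0 ≤ S3 := setIntegral_nonneg measurableSet_Ioi fun _ _ => h0 _
  have f2 : 0 ≤ S2 := setIntegral_nonneg measurableSet_Ioi fun s hs =>
    div_nonneg (h0 s) (le_of_lt (lt_trans hr hs))
  have fsplit : I = S1 + S3 := hsplit r hr
  have fS1I : S1 ≤ I := by linarith
  have fS3I : S3 ≤ I := by linarith
  -- S2 ≤ S3 / a ≤ I / a
  have fS2a : S2 ≤ I / a := by
    have h1 : S2 ≤ ∫ s in Ioi r, v' s / a :=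
      setIntegral_mono hgint.integrableOn (hint.div_const a).integrableOn hpt_a
    rw [integral_div] at h1
    exact h1.trans (by gcongr)
  -- S2 ≤ I / r
  have fS2r : S2 ≤ I / r := by
    have h1 : S2 ≤ ∫ s in Ioi r, v' s / r := by
      refine setIntegral_mono_on hgint.integrableOn (hint.div_const r).integrableOn
        measurableSet_Ioi fun s hs => ?_
      exact div_le_div₀ (h0 s) le_rfl hr (le_of_lt hs)
    rw [integral_div] at h1
    exact h1.trans (by gcongr)
  -- S3 / b ≤ S2
  have fS2b : S3 / b ≤ S2 := by
    have h1 : (∫ s in Ioi r, v' s / b) ≤ S2 :=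
      setIntegral_mono (hint.div_const b).integrableOn hgint.integrableOn hpt_b
    rwa [integral_div] at h1
  -- values of S1 at extremes
  have fS10 : r < a → S1 = 0 := by
    intro hra
    rw [hS1, setIntegral_congr_fun measurableSet_Ioc
      (fun s hs => hsupp s (fun hc => absurd hc.1 (not_le.2 (lt_of_le_of_lt hs.2 hra))))]
    simp
  have fS1b : b ≤ r → S1 = I := by
    intro hbr
    have : S3 = 0 := by
      rw [hS3, setIntegral_congr_fun measurableSet_Ioi
        (fun s hs => hsupp s (fun hc => absurd hc.2 (not_le.2 (lt_of_le_of_lt hbr hs))))]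
      simp
    linarith
  set μ := min r 1 with hμ
  have hμpos : 0 < μ := lt_min hr one_pos
  have hμr : μ ≤ r := min_le_left _ _
  have hμ1 : μ ≤ 1 := min_le_right _ _
  constructor
  · -- lower bound
    have key : I / m2 * μ ≤ S1 + r * S2 := by
      rcases le_or_gt r b with hrb | hbr
      · have h1 : I * r ≤ (S1 + r * S2) * b := by
          have h2 : S3 ≤ b * S2 := (div_le_iff₀' hb).1 fS2b
          nlinarith
        calc I / m2 * μ ≤ I / b * r := by
              apply mul_le_mul _ hμr hμpos.le (by positivity)
              exact div_le_div₀ hI.le le_rfl hb (le_max_left _ _)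
          _ ≤ S1 + r * S2 := by rw [div_mul_eq_mul_div, div_le_iff₀ hb]; linarith
      · have h1 : S1 = I := fS1b hbr.le
        calc I / m2 * μ ≤ I / m2 * 1 := by
              apply mul_le_mul_of_nonneg_left hμ1 (by positivity)
          _ ≤ I := by
              rw [mul_one]
              exact div_le_self hI.le (le_max_right _ _)
          _ ≤ S1 + r * S2 := by nlinarith
    have hCinv : C⁻¹ ≤ I / m2 := by
      rw [inv_le_comm₀ hCpos (by positivity)]
      calc (I / m2)⁻¹ = m2 / I := by rw [inv_div]
        _ ≤ C := le_max_right _ _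
    calc C⁻¹ * (1 / r * μ) ≤ I / m2 * (1 / r * μ) := by
          apply mul_le_mul_of_nonneg_right hCinv (by positivity)
      _ = (I / m2 * μ) / r := by ring
      _ ≤ (S1 + r * S2) / r := by gcongr
      _ = 1 / r * S1 + S2 := by field_simp
  · -- upper bound
    have T1 : S1 ≤ I / m1 * μ := by
      rcases lt_or_ge r a with hra | har
      · rw [fS10 hra]; positivity
      · have hm1μ : m1 ≤ μ := le_min (le_trans (min_le_left _ _) har) (min_le_right _ _)
        calc S1 ≤ I := fS1I
          _ = I / m1 * m1 := by field_simp
          _ ≤ I / m1 * μ := mul_le_mul_of_nonneg_left hm1μ (by positivity)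
    have T2 : r * S2 ≤ I / m1 * μ := by
      rcases le_or_gt r 1 with hr1 | hr1
      · have hμeq : μ = r := min_eq_left hr1
        calc r * S2 ≤ r * (I / a) := mul_le_mul_of_nonneg_left fS2a hr.le
          _ ≤ I / m1 * μ := by
              rw [hμeq, mul_comm]
              apply mul_le_mul_of_nonneg_right _ hr.le
              exact div_le_div₀ hI.le le_rfl hm1pos (min_le_left _ _)
      · have hμeq : μ = 1 := min_eq_right hr1.le
        calc r * S2 ≤ r * (I / r) := mul_le_mul_of_nonneg_left fS2r hr.le
          _ = I := by field_simp
          _ ≤ I / m1 * μ := by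
              rw [hμeq, mul_one]
              rw [le_div_iff₀ hm1pos]
              nlinarith [min_le_right a 1]
    have hCub : 2 * I / m1 ≤ C := le_max_left _ _
    calc 1 / r * S1 + S2 = (S1 + r * S2) / r := by field_simp
      _ ≤ (2 * I / m1 * μ) / r := by
          have hsum : 2 * I / m1 * μ = I / m1 * μ + I / m1 * μ := by ring
          gcongr
          linarith
      _ = 2 * I / m1 * (1 / r * μ) := by ring
      _ ≤ C * (1 / r * μ) := mul_le_mul_of_nonneg_right hCub (by positivity)

/-- The integral of the indicator of `(0,1)` over `(0,r]`. -/
lemma aux_w (r : ℝ) (hr : 0 < r) :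
    (∫ s in Ioc (0:ℝ) r, (Ioo (0:ℝ) 1).indicator (fun _ => (1:ℝ)) s) = min r 1 := by
  rw [setIntegral_indicator measurableSet_Ioo, setIntegral_const, smul_eq_mul, mul_one]
  have hmin : 0 ≤ min r 1 := le_min hr.le zero_le_one
  have h1 : Ioo (0:ℝ) (min r 1) ⊆ Ioc 0 r ∩ Ioo 0 1 := fun x hx =>
    ⟨⟨hx.1, le_of_lt (lt_of_lt_of_le hx.2 (min_le_left _ _))⟩,
      hx.1, lt_of_lt_of_le hx.2 (min_le_right _ _)⟩
  have h2 : Ioc (0:ℝ) r ∩ Ioo 0 1 ⊆ Ioc 0 (min r 1) := fun x hx =>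
    ⟨hx.1.1, le_min hx.1.2 (le_of_lt hx.2.2)⟩
  have hvol : volume (Ioc (0:ℝ) r ∩ Ioo 0 1) = ENNReal.ofReal (min r 1) := by
    apply le_antisymm
    · simpa using measure_mono (μ := volume) h2
    · simpa using measure_mono (μ := volume) h1
  rw [measureReal_def, hvol, ENNReal.toReal_ofReal hmin]

/-- For `w = χ_{(0,1)}` and
`v(t) = t⁻²(log(4t) χ_{(1/4,1/2)}(t) - log t χ_{(1/2,1)}(t))`, one has `v ≥ 0` and
`(1/r)∫_0^r w ≈ (1/r)∫_0^r v + ∫_r^∞ v(s)/s ds`; more generally this equivalence holds for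
any bounded nonnegative `v'` with compact support in `(0,∞)` which is not a.e. zero. -/
theorem stmt_18 (w v : ℝ → ℝ)
    (hw : ∀ t, w t = Set.indicator (Set.Ioo (0 : ℝ) 1) (fun _ => (1 : ℝ)) t)
    (hv : ∀ t, v t = t⁻¹ ^ 2 *
      (Set.indicator (Set.Ioo (1/4 : ℝ) (1/2)) (fun x => Real.log (4 * x)) t -
        Set.indicator (Set.Ioo (1/2 : ℝ) 1) (fun x => Real.log x) t)) :
    (∀ t, 0 ≤ v t) ∧
    (∃ C > 0, ∀ r > 0,
      C⁻¹ * ((1 / r) * ∫ s in Set.Ioc 0 r, w s) ≤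
        (1 / r) * (∫ s in Set.Ioc 0 r, v s) + ∫ s in Set.Ioi r, v s / s ∧
      (1 / r) * (∫ s in Set.Ioc 0 r, v s) + ∫ s in Set.Ioi r, v s / s ≤
        C * ((1 / r) * ∫ s in Set.Ioc 0 r, w s)) ∧
    (∀ v' : ℝ → ℝ, Measurable v' → (∀ t, 0 ≤ v' t) → (∃ M, ∀ t, v' t ≤ M) →
      (∃ a b : ℝ, 0 < a ∧ a ≤ b ∧ ∀ t, t ∉ Set.Icc a b → v' t = 0) →
      0 < (∫ t in Set.Ioi 0, v' t) →
      ∃ C > 0, ∀ r > 0,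
        C⁻¹ * ((1 / r) * ∫ s in Set.Ioc 0 r, w s) ≤
          (1 / r) * (∫ s in Set.Ioc 0 r, v' s) + ∫ s in Set.Ioi r, v' s / s ∧
        (1 / r) * (∫ s in Set.Ioc 0 r, v' s) + ∫ s in Set.Ioi r, v' s / s ≤
          C * ((1 / r) * ∫ s in Set.Ioc 0 r, w s)) := by
  have hwint : ∀ r : ℝ, 0 < r → (∫ s in Ioc (0:ℝ) r, w s) = min r 1 := by
    intro r hr
    rw [show w = fun t => (Ioo (0:ℝ) 1).indicator (fun _ => (1:ℝ)) t from funext hw]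
    exact aux_w r hr
  -- nonnegativity of v
  have hv_nonneg : ∀ t, 0 ≤ v t := by
    intro t
    rw [hv t]
    apply mul_nonneg (sq_nonneg _)
    by_cases h1 : t ∈ Ioo (1/4 : ℝ) (1/2)
    · have h2 : t ∉ Ioo (1/2 : ℝ) 1 := fun h => absurd h.1 (not_lt.2 h1.2.le)
      rw [indicator_of_mem h1, indicator_of_notMem h2, sub_zero]
      exact Real.log_nonneg (by linarith [h1.1])
    · rw [indicator_of_notMem h1]
      by_cases h2 : t ∈ Ioo (1/2 : ℝ) 1
      · rw [indicator_of_mem h2]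
        have := Real.log_nonpos (by linarith [h2.1]) h2.2.le
        linarith
      · rw [indicator_of_notMem h2]; simp
  -- measurability of v
  have hv_meas : Measurable v := by
    rw [show v = fun t => t⁻¹ ^ 2 *
      (Set.indicator (Set.Ioo (1/4 : ℝ) (1/2)) (fun x => Real.log (4 * x)) t -
        Set.indicator (Set.Ioo (1/2 : ℝ) 1) (fun x => Real.log x) t) from funext hv]
    apply Measurable.mul
    · exact (measurable_inv.pow_const 2)
    · exact ((Real.measurable_log.comp (measurable_const_mul 4)).indicator
        measurableSet_Ioo).sub (Real.measurable_log.indicator measurableSet_Ioo)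
  -- bound of v
  have hv_bd : ∀ t, v t ≤ 16 := by
    intro t
    rw [hv t]
    by_cases h1 : t ∈ Ioo (1/4 : ℝ) (1/2)
    · have h2 : t ∉ Ioo (1/2 : ℝ) 1 := fun h => absurd h.1 (not_lt.2 h1.2.le)
      rw [indicator_of_mem h1, indicator_of_notMem h2, sub_zero]
      have ht : (0:ℝ) < t := by linarith [h1.1]
      have hinv : t⁻¹ < 4 := by
        have := inv_strictAnti₀ (show (0:ℝ) < 1/4 by norm_num) h1.1
        norm_num at this
        exact this
      have hinv0 : 0 ≤ t⁻¹ := inv_nonneg.2 ht.le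
      have hlog0 : 0 ≤ Real.log (4 * t) := Real.log_nonneg (by linarith [h1.1])
      have hlog : Real.log (4 * t) ≤ 1 := by
        have h4t : (4:ℝ) * t ≤ 2 := by linarith [h1.2]
        calc Real.log (4 * t) ≤ Real.log 2 := Real.log_le_log (by linarith) h4t
          _ ≤ 1 := by linarith [Real.log_two_lt_d9]
      nlinarith
    · rw [indicator_of_notMem h1]
      by_cases h2 : t ∈ Ioo (1/2 : ℝ) 1
      · rw [indicator_of_mem h2, zero_sub]
        have ht : (0:ℝ) < t := by linarith [h2.1]
        have hinv : t⁻¹ < 2 := by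
          have := inv_strictAnti₀ (show (0:ℝ) < 1/2 by norm_num) h2.1
          norm_num at this
          exact this
        have hinv0 : 0 ≤ t⁻¹ := inv_nonneg.2 ht.le
        have hlog0 : 0 ≤ -Real.log t := by
          have := Real.log_nonpos ht.le h2.2.le
          linarith
        have hlog : -Real.log t ≤ 1 := by
          have : Real.log (1/2) ≤ Real.log t := Real.log_le_log (by norm_num) h2.1.le
          rw [show (1/2 : ℝ) = 2⁻¹ by norm_num, Real.log_inv] at this
          linarith [Real.log_two_lt_d9]
        nlinarith
      · rw [indicator_of_notMem h2]; simp
  -- support of v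
  have hv_supp : ∀ t, t ∉ Icc (1/4 : ℝ) 1 → v t = 0 := by
    intro t ht
    rw [hv t]
    have h1 : t ∉ Ioo (1/4 : ℝ) (1/2) := fun h => ht ⟨h.1.le, by linarith [h.2]⟩
    have h2 : t ∉ Ioo (1/2 : ℝ) 1 := fun h => ht ⟨by linarith [h.1], h.2.le⟩
    rw [indicator_of_notMem h1, indicator_of_notMem h2]
    ring
  -- positivity of the integral of v
  have hv_int : Integrable v :=
    aux_int v hv_meas 16 (1/4) 1 (fun t => by rw [abs_of_nonneg (hv_nonneg t)]; exact hv_bd t)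
      hv_supp
  have hIpos : 0 < ∫ t in Ioi (0:ℝ), v t := by
    have hsub : Ioo (3/8 : ℝ) (1/2) ⊆ Ioi 0 := fun x hx => lt_trans (by norm_num) hx.1
    have h1 : (∫ t in Ioo (3/8 : ℝ) (1/2), v t) ≤ ∫ t in Ioi (0:ℝ), v t :=
      setIntegral_mono_set hv_int.integrableOn
        (Filter.Eventually.of_forall fun t => hv_nonneg t)
        (HasSubset.Subset.eventuallyLE hsub)
    have h2 : Real.log (3/2) * (1/8 : ℝ) ≤ ∫ t in Ioo (3/8 : ℝ) (1/2), v t := by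
      have hc : (∫ _ in Ioo (3/8 : ℝ) (1/2), Real.log (3/2)) = Real.log (3/2) * (1/8) := by
        rw [setIntegral_const, smul_eq_mul, measureReal_def, Real.volume_Ioo]
        rw [show (1/2 : ℝ) - 3/8 = 1/8 by norm_num, ENNReal.toReal_ofReal (by norm_num)]
        ring
      rw [← hc]
      refine setIntegral_mono_on (integrableOn_const ((by
        rw [Real.volume_Ioo]; exact ENNReal.ofReal_lt_top.ne))) hv_int.integrableOn
        measurableSet_Ioo fun x hx => ?_
      rw [hv x]
      have hx1 : x ∈ Ioo (1/4 : ℝ) (1/2) := ⟨by linarith [hx.1], hx.2⟩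
      have hx2 : x ∉ Ioo (1/2 : ℝ) 1 := fun h => absurd h.1 (not_lt.2 hx.2.le)
      rw [indicator_of_mem hx1, indicator_of_notMem hx2, sub_zero]
      have hx0 : (0:ℝ) < x := by linarith [hx.1]
      have hxi : (2:ℝ) ≤ x⁻¹ := by
        have := inv_anti₀ hx0 hx.2.le
        norm_num at this
        exact this
      have hla : Real.log (3/2) ≤ Real.log (4 * x) :=
        Real.log_le_log (by norm_num) (by linarith [hx.1])
      have hl0 : 0 ≤ Real.log (3/2) := Real.log_nonneg (by norm_num)
      have hsq : (1:ℝ) ≤ x⁻¹ ^ 2 := by nlinarith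
      have hlog4 : 0 ≤ Real.log (4 * x) := hl0.trans hla
      nlinarith [mul_nonneg (by linarith : (0:ℝ) ≤ x⁻¹ ^ 2 - 1) hlog4]
    have h3 : 0 < Real.log (3/2) := Real.log_pos (by norm_num)
    linarith
  refine ⟨hv_nonneg, ?_, ?_⟩
  · obtain ⟨C, hC, h⟩ := aux_key v hv_meas hv_nonneg ⟨16, hv_bd⟩
      ⟨1/4, 1, by norm_num, by norm_num, hv_supp⟩ hIpos
    exact ⟨C, hC, fun r hr => by rw [hwint r hr]; exact h r hr⟩
  · intro v' hm h0 hM hab hI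
    obtain ⟨C, hC, h⟩ := aux_key v' hm h0 hM hab hI
    exact ⟨C, hC, fun r hr => by rw [hwint r hr]; exact h r hr⟩
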